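/- Let p < -1. Then Θ_p{α, r} < π/2 for all α, r with 0 < α < 1 < r. -/

import Mathlib

open Real Filter

/-- `F_p(s, α, r) = ((1 - s^{2p})/(1 - r^{2p}))(r² + α²)
  + ((s^{2p} - r^{2p})/(1 - r^{2p}))(1 + α² r²) - s² - α² r² s⁻²`. -/
noncomputable def Fp (p α r s : ℝ) : ℝ :=
  (1 - s ^ (2 * p)) / (1 - r ^ (2 * p)) * (r ^ 2 + α ^ 2) +
  (s ^ (2 * p) - r ^ (2 * p)) / (1 - r ^ (2 * p)) * (1 + α ^ 2 * r ^ 2) -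
  s ^ 2 - α ^ 2 * r ^ 2 * s ^ (-2 : ℝ)

/-- The period function `Θ_p{α, r} = ∫_1^r ds / √(F_p(s, α, r))`. -/
noncomputable def Theta (p α r : ℝ) : ℝ :=
  ∫ s in (1 : ℝ)..r, (Real.sqrt (Fp p α r s))⁻¹

open Set MeasureTheory Topology in
/-- Secant-slope inequality for the strictly convex function `x ^ m`, `m > 1`:
secants from the point `(1, 1)` have strictly increasing slopes. -/
lemma slope_key_aux15 {m a b : ℝ} (hm : 1 < m) (hb : 0 < b) (hba : b < a) (ha : a < 1) :
    (1 - b ^ m) * (1 - a) < (1 - a ^ m) * (1 - b) := by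
  have hs := (strictConvexOn_rpow hm).slope_strict_mono_adjacent
    (Set.mem_Ici.2 hb.le) (Set.mem_Ici.2 zero_le_one) hba ha
  simp only [Real.one_rpow] at hs
  rw [div_lt_div_iff₀ (by linarith) (by linarith)] at hs
  nlinarith [hs]

open Set MeasureTheory Topology in
/-- For `p < -1`, `F_p(s, α, r)` strictly dominates `F_{-1}(s, α, r) = (s²-1)(r²-s²)/s²`
on `(1, r)`. -/
lemma Fp_lower_aux15 {p α r : ℝ} (hp : p < -1) (hα₀ : 0 < α) (hα₁ : α < 1) (hr : 1 < r)
    {s : ℝ} (hs1 : 1 < s) (hsr : s < r) :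
    (s ^ 2 - 1) * (r ^ 2 - s ^ 2) / s ^ 2 < Fp p α r s := by
  have hs0 : (0:ℝ) < s := lt_trans one_pos hs1
  have hr0 : (0:ℝ) < r := lt_trans one_pos hr
  have hq : 2 * p < 0 := by linarith
  have hrq1 : r ^ (2*p) < 1 := Real.rpow_lt_one_of_one_lt_of_neg hr hq
  have hsq1 : s ^ (2*p) < 1 := Real.rpow_lt_one_of_one_lt_of_neg hs1 hq
  have hden : (0:ℝ) < 1 - r ^ (2*p) := by linarith
  have hs2 : (1:ℝ) < s ^ 2 := by nlinarith
  have hr2 : (1:ℝ) < r ^ 2 := by nlinarith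
  have hsr2 : s ^ 2 < r ^ 2 := by nlinarith
  have hs2p : (0:ℝ) < s ^ 2 := by positivity
  have hr2p : (0:ℝ) < r ^ 2 := by positivity
  -- the exponent identities
  have hsneg : ∀ x : ℝ, 0 < x → x ^ (-2 : ℝ) = (x ^ 2)⁻¹ := by
    intro x hx
    rw [Real.rpow_neg hx.le, show ((2:ℝ)) = ((2:ℕ):ℝ) by norm_num, Real.rpow_natCast]
  have haeq : ∀ x : ℝ, 0 < x → ((x ^ 2)⁻¹ : ℝ) ^ (-p) = x ^ (2 * p) := by
    intro x hx
    rw [← hsneg x hx, ← Real.rpow_mul hx.le]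
    norm_num
  -- key slope inequality
  have key := slope_key_aux15 (m := -p) (a := (s^2)⁻¹) (b := (r^2)⁻¹) (by linarith)
    (by positivity) (by exact inv_strictAnti₀ hs2p hsr2) (by
      rw [inv_lt_one_iff₀]; right; exact hs2)
  rw [haeq s hs0, haeq r hr0] at key
  -- key : (1 - r^(2p)) * (1 - (s^2)⁻¹) < (1 - s^(2p)) * (1 - (r^2)⁻¹)
  have hLlow : r^2*(s^2-1)/(s^2*(r^2-1)) < (1 - s ^ (2*p))/(1 - r ^ (2*p)) := by
    rw [div_lt_div_iff₀ (by nlinarith) hden]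
    have h2 := mul_lt_mul_of_pos_right key (mul_pos hs2p hr2p)
    have e1 : (1 - r ^ (2*p)) * (1 - (s^2)⁻¹) * (s^2 * r^2)
        = r^2 * (s^2 - 1) * (1 - r ^ (2*p)) := by field_simp
    have e2 : (1 - s ^ (2*p)) * (1 - (r^2)⁻¹) * (s^2 * r^2)
        = (1 - s ^ (2*p)) * (s^2 * (r^2-1)) := by field_simp
    rw [e1, e2] at h2
    linarith
  have main : Fp p α r s - (s ^ 2 - 1) * (r ^ 2 - s ^ 2) / s ^ 2
      = ((1 - s ^ (2*p))/(1 - r ^ (2*p)) - r^2*(s^2-1)/(s^2*(r^2-1)))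
        * ((r^2 - 1) * (1 - α^2)) := by
    have hr1 : r ^ 2 - 1 ≠ 0 := by linarith
    have hs2ne : (s:ℝ) ^ 2 ≠ 0 := ne_of_gt hs2p
    have hdenne : 1 - r ^ (2*p) ≠ 0 := ne_of_gt hden
    rw [Fp, hsneg s hs0]
    field_simp
    ring
  have hpos : 0 < ((1 - s ^ (2*p))/(1 - r ^ (2*p)) - r^2*(s^2-1)/(s^2*(r^2-1)))
      * ((r^2 - 1) * (1 - α^2)) := by
    have hα2 : α ^ 2 < 1 := by nlinarith
    exact mul_pos (by linarith) (mul_pos (by linarith) (by linarith))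
  linarith

open Set MeasureTheory Topology in
/-- The antiderivative `½ arcsin((2s² - 1 - r²)/(r² - 1))` of the comparison integrand. -/
lemma G_deriv_aux15 {r : ℝ} (hr : 1 < r) {x : ℝ} (hx1 : 1 < x) (hxr : x < r) :
    HasDerivAt (fun s : ℝ => 1/2 * Real.arcsin ((2*s^2 - (1+r^2))/(r^2-1)))
      ((Real.sqrt ((x^2-1)*(r^2-x^2)/x^2))⁻¹) x := by
  have hx0 : (0:ℝ) < x := lt_trans one_pos hx1
  have hr2 : (0:ℝ) < r^2 - 1 := by nlinarith
  have hx2 : (1:ℝ) < x^2 := by nlinarith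
  have hxr2 : x^2 < r^2 := by nlinarith
  have hA : (0:ℝ) < (x^2-1)*(r^2-x^2)/x^2 := by
    apply div_pos (mul_pos (by linarith) (by linarith)) (by positivity)
  set u : ℝ → ℝ := fun s => (2*s^2 - (1+r^2))/(r^2-1) with hu
  have hu_deriv : HasDerivAt u (4*x/(r^2-1)) x := by
    have h1 : HasDerivAt (fun s : ℝ => 2*s^2 - (1+r^2)) (2*(2*x)) x := by
      simpa using (((hasDerivAt_pow 2 x).const_mul (2:ℝ)).sub_const (1+r^2))
    rw [show (2:ℝ)*(2*x) = 4*x by ring] at h1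
    exact h1.div_const (r^2-1)
  have hu_lt : u x < 1 := by
    rw [hu]; simp only
    rw [div_lt_one hr2]; nlinarith
  have hu_gt : -1 < u x := by
    rw [hu]; simp only
    rw [lt_div_iff₀ hr2]; nlinarith
  have harc := Real.hasDerivAt_arcsin (ne_of_gt hu_gt) (ne_of_lt hu_lt)
  have hcomp := (harc.comp x hu_deriv).const_mul (1/2 : ℝ)
  convert hcomp using 1
  case e'_4 => rfl
  case e'_5 => rfl
  case e'_8 => rfl
  have hsq : Real.sqrt (1 - u x ^ 2) = 2*x/(r^2-1) * Real.sqrt ((x^2-1)*(r^2-x^2)/x^2) := by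
    have e : 1 - u x ^ 2 = (2*x/(r^2-1))^2 * ((x^2-1)*(r^2-x^2)/x^2) := by
      rw [hu]; field_simp; ring
    rw [e, Real.sqrt_mul (sq_nonneg _), Real.sqrt_sq (by positivity)]
  have hs : (0:ℝ) < Real.sqrt ((x^2-1)*(r^2-x^2)/x^2) := Real.sqrt_pos.2 hA
  set S := Real.sqrt ((x^2-1)*(r^2-x^2)/x^2) with hS
  rw [hsq]
  field_simp
  ring

open Set MeasureTheory Topology in
/-- The (improper) comparison integral: the integrand is integrable on `(1, r)` and its
integral is exactly `π/2`. -/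
lemma comparator_integral_aux15 {r : ℝ} (hr : 1 < r) :
    IntegrableOn (fun s : ℝ => (Real.sqrt ((s^2-1)*(r^2-s^2)/s^2))⁻¹) (Ioo 1 r) volume ∧
    ∫ s in Ioo 1 r, (Real.sqrt ((s^2-1)*(r^2-s^2)/s^2))⁻¹ = π/2 := by
  set f : ℝ → ℝ := fun s => (Real.sqrt ((s^2-1)*(r^2-s^2)/s^2))⁻¹ with hf
  set G : ℝ → ℝ := fun s => 1/2 * Real.arcsin ((2*s^2 - (1+r^2))/(r^2-1)) with hG
  have hr2 : (0:ℝ) < r^2 - 1 := by nlinarith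
  have hfnn : ∀ x, 0 ≤ f x := fun x => by positivity
  -- continuity of f on Ioo 1 r
  have hfcont : ContinuousOn f (Ioo 1 r) := by
    apply ContinuousOn.inv₀
    · apply ContinuousOn.sqrt
      apply ContinuousOn.div
      · fun_prop
      · fun_prop
      · intro x hx
        have : (1:ℝ) < x := hx.1
        positivity
    · intro x hx
      have hx1 : (1:ℝ) < x := hx.1
      have hxr : x < r := hx.2
      have : (0:ℝ) < (x^2-1)*(r^2-x^2)/x^2 := by
        apply div_pos (mul_pos (by nlinarith) (by nlinarith)) (by positivity)
      exact ne_of_gt (Real.sqrt_pos.2 this)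
  -- continuity of G
  have hGcont : Continuous G := by
    apply continuous_const.mul
    exact Real.continuous_arcsin.comp (by fun_prop)
  have hG1 : G 1 = -(π/4) := by
    rw [hG]; simp only
    rw [show (2*(1:ℝ)^2 - (1+r^2))/(r^2-1) = -1 by field_simp; ring]
    rw [Real.arcsin_neg_one]; ring
  have hGr : G r = π/4 := by
    rw [hG]; simp only
    rw [show (2*(r:ℝ)^2 - (1+r^2))/(r^2-1) = 1 by field_simp; ring]
    rw [Real.arcsin_one]; ring
  have hGb : ∀ x, -(π/4) ≤ G x ∧ G x ≤ π/4 := by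
    intro x
    have h1 := Real.arcsin_le_pi_div_two ((2*x^2 - (1+r^2))/(r^2-1))
    have h2 := Real.neg_pi_div_two_le_arcsin ((2*x^2 - (1+r^2))/(r^2-1))
    constructor <;> (rw [hG]; simp only) <;> linarith
  -- the approximating sequences
  set a : ℕ → ℝ := fun n => 1 + (r-1)/(n+2) with ha
  set b : ℕ → ℝ := fun n => r - (r-1)/(n+2) with hb
  have hn2 : ∀ n : ℕ, (0:ℝ) < (n:ℝ) + 2 := fun n => by positivity
  have hfrac_pos : ∀ n : ℕ, (0:ℝ) < (r-1)/((n:ℝ)+2) := fun n => by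
    apply div_pos (by linarith) (hn2 n)
  have hfrac_le : ∀ n : ℕ, (r-1)/((n:ℝ)+2) ≤ (r-1)/2 := fun n => by
    apply div_le_div_of_nonneg_left (by linarith) (by norm_num) (by
      have := Nat.cast_nonneg (α := ℝ) n; linarith)
  have hao : ∀ n, 1 < a n := fun n => by
    have := hfrac_pos n; rw [ha]; simp only; linarith
  have hbo : ∀ n, b n < r := fun n => by
    have := hfrac_pos n; rw [hb]; simp only; linarith
  have hab : ∀ n, a n ≤ b n := fun n => by
    have := hfrac_le n; rw [ha, hb]; simp only; linarith
  have hIcc : ∀ n, Icc (a n) (b n) ⊆ Ioo 1 r := fun n x hx =>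
    ⟨lt_of_lt_of_le (hao n) hx.1, lt_of_le_of_lt hx.2 (hbo n)⟩
  have hta : Tendsto a atTop (𝓝 1) := by
    have h0 : Tendsto (fun n : ℕ => (r-1)/((n:ℝ)+2)) atTop (𝓝 0) := by
      apply Tendsto.div_atTop tendsto_const_nhds
      exact tendsto_atTop_add_const_right _ 2 tendsto_natCast_atTop_atTop
    have := tendsto_const_nhds (x := (1:ℝ)) (f := atTop (α := ℕ)) |>.add h0
    simpa using this
  have htb : Tendsto b atTop (𝓝 r) := by
    have h0 : Tendsto (fun n : ℕ => (r-1)/((n:ℝ)+2)) atTop (𝓝 0) := by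
      apply Tendsto.div_atTop tendsto_const_nhds
      exact tendsto_atTop_add_const_right _ 2 tendsto_natCast_atTop_atTop
    have := tendsto_const_nhds (x := (r:ℝ)) (f := atTop (α := ℕ)) |>.sub h0
    simpa using this
  -- FTC on the subintervals
  have hFTC : ∀ n, ∫ x in (a n)..(b n), f x = G (b n) - G (a n) := by
    intro n
    apply intervalIntegral.integral_eq_sub_of_hasDerivAt
    · intro x hx
      rw [uIcc_of_le (hab n)] at hx
      have hx' := hIcc n hx
      exact G_deriv_aux15 hr hx'.1 hx'.2
    · apply ContinuousOn.intervalIntegrable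
      rw [uIcc_of_le (hab n)]
      exact hfcont.mono (hIcc n)
  have hintn : ∀ n, IntegrableOn f (Ioc (a n) (b n)) volume := fun n =>
    ((hfcont.mono (hIcc n)).integrableOn_Icc).mono_set Ioc_subset_Icc_self
  have hnorm : ∀ n, ∫ x in Ioc (a n) (b n), ‖f x‖ = G (b n) - G (a n) := by
    intro n
    have : ∀ x, ‖f x‖ = f x := fun x => norm_of_nonneg (hfnn x)
    simp only [this]
    rw [← intervalIntegral.integral_of_le (hab n), hFTC n]
  have hInt : IntegrableOn f (Ioc 1 r) volume := by
    apply integrableOn_Ioc_of_intervalIntegral_norm_bounded (I := π/2) hintn hta htb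
    filter_upwards with n
    rw [hnorm n]
    have := hGb (a n); have := hGb (b n); linarith
  have hIntIoo : IntegrableOn f (Ioo 1 r) volume := hInt.mono_set Ioo_subset_Ioc_self
  refine ⟨hIntIoo, ?_⟩
  -- value of the integral
  have cover := MeasureTheory.aecover_Ioo_of_Ioc (μ := volume) (l := atTop) hta htb
  apply cover.integral_eq_of_tendsto _ hIntIoo
  have heq : ∀ n, ∫ x in Ioc (a n) (b n), f x ∂(volume.restrict (Ioo 1 r))
      = G (b n) - G (a n) := by
    intro n
    rw [Measure.restrict_restrict measurableSet_Ioc,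
      Set.inter_eq_self_of_subset_left (fun x hx => hIcc n ⟨hx.1.le, hx.2⟩),
      ← intervalIntegral.integral_of_le (hab n), hFTC n]
  simp only [heq]
  have := ((hGcont.tendsto r).comp htb).sub ((hGcont.tendsto 1).comp hta)
  rw [hGr, hG1] at this
  simpa [Function.comp, show π/4 - -(π/4) = π/2 by ring] using this

open Set MeasureTheory Topology in
theorem stmt_15 (p : ℝ) (hp : p < -1) (α r : ℝ) (hα₀ : 0 < α) (hα₁ : α < 1) (hr : 1 < r) :
    Theta p α r < π / 2 := by
  obtain ⟨hIntIoo, hval⟩ := comparator_integral_aux15 hr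
  set f : ℝ → ℝ := fun s => (Real.sqrt ((s^2-1)*(r^2-s^2)/s^2))⁻¹ with hf
  set g : ℝ → ℝ := fun s => (Real.sqrt (Fp p α r s))⁻¹ with hg
  have hgnn : ∀ x, 0 ≤ g x := fun x => by rw [hg]; positivity
  have hfnn : ∀ x, 0 ≤ f x := fun x => by rw [hf]; positivity
  -- pointwise strict comparison on (1, r)
  have hcmp : ∀ x ∈ Ioo (1:ℝ) r, g x < f x := by
    intro x hx
    have hx1 : (1:ℝ) < x := hx.1
    have hxr : x < r := hx.2
    have hA : (0:ℝ) < (x^2-1)*(r^2-x^2)/x^2 := by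
      apply div_pos (mul_pos (by nlinarith) (by nlinarith)) (by positivity)
    have hlt : (x^2-1)*(r^2-x^2)/x^2 < Fp p α r x := by
      have := Fp_lower_aux15 hp hα₀ hα₁ hr hx1 hxr
      linarith [this]
    exact inv_strictAnti₀ (Real.sqrt_pos.2 hA) (Real.sqrt_lt_sqrt hA.le hlt)
  -- measurability of g
  have hrpc : ∀ q : ℝ, ContinuousOn (fun s : ℝ => s ^ (q : ℝ)) (Ioo 1 r) := fun q x hx =>
    (Real.continuousAt_rpow_const x q (Or.inl (ne_of_gt (lt_trans one_pos hx.1)))).continuousWithinAt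
  have hFcont : ContinuousOn (fun s : ℝ => Fp p α r s) (Ioo 1 r) := by
    unfold Fp
    apply ContinuousOn.sub
    apply ContinuousOn.sub
    apply ContinuousOn.add
    · exact ((continuousOn_const.sub (hrpc (2*p))).div_const _).mul continuousOn_const
    · exact (((hrpc (2*p)).sub continuousOn_const).div_const _).mul continuousOn_const
    · exact (continuous_pow 2).continuousOn
    · exact continuousOn_const.mul (hrpc (-2))
  have hFpos : ∀ x ∈ Ioo (1:ℝ) r, 0 < Fp p α r x := by
    intro x hx
    have hx1 : (1:ℝ) < x := hx.1
    have hxr : x < r := hx.2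
    have hA : (0:ℝ) < (x^2-1)*(r^2-x^2)/x^2 := by
      apply div_pos (mul_pos (by nlinarith) (by nlinarith)) (by positivity)
    exact lt_trans hA (Fp_lower_aux15 hp hα₀ hα₁ hr hx1 hxr)
  have hgcont : ContinuousOn g (Ioo 1 r) := by
    rw [hg]
    exact (hFcont.sqrt).inv₀ fun x hx => ne_of_gt (Real.sqrt_pos.2 (hFpos x hx))
  -- integrability of g on (1, r)
  have hgint : IntegrableOn g (Ioo 1 r) volume := by
    apply hIntIoo.mono' (hgcont.aestronglyMeasurable measurableSet_Ioo)
    filter_upwards [ae_restrict_mem measurableSet_Ioo] with x hx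
    rw [norm_of_nonneg (hgnn x)]
    exact (hcmp x hx).le
  -- the difference has positive integral
  have hdiffint : IntegrableOn (fun x => f x - g x) (Ioo 1 r) volume :=
    hIntIoo.sub hgint
  have hsubpos : 0 < ∫ x in Ioo (1:ℝ) r, (f x - g x) := by
    rw [setIntegral_pos_iff_support_of_nonneg_ae _ hdiffint]
    · have hsup : Ioo (1:ℝ) r ⊆ Function.support (fun x => f x - g x) := by
        intro x hx
        exact sub_ne_zero.2 (ne_of_gt (hcmp x hx))
      rw [Set.inter_eq_self_of_subset_right hsup, Real.volume_Ioo]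
      exact ENNReal.ofReal_pos.2 (by linarith)
    · filter_upwards [ae_restrict_mem measurableSet_Ioo] with x hx
      exact sub_nonneg.2 (hcmp x hx).le
  have hsplit : ∫ x in Ioo (1:ℝ) r, (f x - g x)
      = (∫ x in Ioo (1:ℝ) r, f x) - ∫ x in Ioo (1:ℝ) r, g x :=
    integral_sub hIntIoo hgint
  have hTheta : Theta p α r = ∫ x in Ioo (1:ℝ) r, g x := by
    rw [Theta, intervalIntegral.integral_of_le hr.le, integral_Ioc_eq_integral_Ioo]
  rw [hTheta]
  rw [hval] at hsplit
  linarith
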